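/- arXiv:1602.04360 — 3 statements merged into one kernel-verified Lean document; each statement's English description precedes it below -/
import Mathlib

section
/- Let m ≥ 2 and let a_2 ≤ a_3 ≤ … ≤ a_m be integers with 0 ≤ a_2 and a_m > 0. Then the inequality 4 + a_2 + … + a_m > m·a_m holds if and only if one of the following holds: (1) a_2 = … = a_m and this common value lies in {1,2,3}; (2) m ≥ 3, a_2 + 1 = a_3 = … = a_m and this common value a_3 lies in {1,2}; (3) m ≥ 4, a_2 = a_3 = 0 and a_4 = … = a_m = 1. -/
theorem stmt_0 (m : ℕ) (hm : 2 ≤ m) (a : ℕ → ℤ)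
    (hmono : ∀ i j, 2 ≤ i → i ≤ j → j ≤ m → a i ≤ a j)
    (h0 : 0 ≤ a 2) (hpos : 0 < a m) :
    (4 + ∑ k ∈ Finset.Icc 2 m, a k > (m : ℤ) * a m) ↔
      ((∀ k ∈ Finset.Icc 2 m, a k = a m) ∧ a m ∈ ({1, 2, 3} : Set ℤ)) ∨
      (3 ≤ m ∧ a 2 + 1 = a 3 ∧ (∀ k ∈ Finset.Icc 3 m, a k = a 3) ∧
        a 3 ∈ ({1, 2} : Set ℤ)) ∨
      (4 ≤ m ∧ a 2 = 0 ∧ a 3 = 0 ∧ ∀ k ∈ Finset.Icc 4 m, a k = 1) := by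
  have step : ∀ (f : ℕ → ℤ) (c b : ℕ), c ≤ b →
      ∑ k ∈ Finset.Icc c b, f k = f c + ∑ k ∈ Finset.Icc (c+1) b, f k := by
    intro f c b hcb
    rw [Finset.Icc_add_one_left_eq_Ioc, ← Finset.Ioc_insert_left hcb, Finset.sum_insert (by simp)]
  have hterm : ∀ k ∈ Finset.Icc 2 m, (0:ℤ) ≤ a m - a k := by
    intro k hk
    simp only [Finset.mem_Icc] at hk
    linarith [hmono k m hk.1 hk.2 le_rfl]
  have hDS : ∑ k ∈ Finset.Icc 2 m, (a m - a k)
      = ((m:ℤ) - 1) * a m - ∑ k ∈ Finset.Icc 2 m, a k := by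
    rw [Finset.sum_sub_distrib, Finset.sum_const, Nat.card_Icc, nsmul_eq_mul]
    have h1 : ((m + 1 - 2 : ℕ) : ℤ) = (m:ℤ) - 1 := by omega
    rw [h1]
  have hub : ∀ j, 2 ≤ j → j ≤ m →
      ((j:ℤ) - 1) * (a m - a j) ≤ ∑ k ∈ Finset.Icc 2 m, (a m - a k) := by
    intro j hj2 hjm
    have h1 : ∑ k ∈ Finset.Icc 2 j, (a m - a j) ≤ ∑ k ∈ Finset.Icc 2 j, (a m - a k) := by
      apply Finset.sum_le_sum
      intro k hk
      simp only [Finset.mem_Icc] at hk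
      linarith [hmono k j hk.1 hk.2 hjm]
    have h2 : ∑ k ∈ Finset.Icc 2 j, (a m - a k) ≤ ∑ k ∈ Finset.Icc 2 m, (a m - a k) :=
      Finset.sum_le_sum_of_subset_of_nonneg (Finset.Icc_subset_Icc_right hjm)
        (fun k hk _ => hterm k hk)
    have h3 : ∑ k ∈ Finset.Icc 2 j, (a m - a j) = ((j:ℤ) - 1) * (a m - a j) := by
      rw [Finset.sum_const, Nat.card_Icc, nsmul_eq_mul]
      have : ((j + 1 - 2 : ℕ) : ℤ) = (j:ℤ) - 1 := by omega
      rw [this]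
    linarith
  constructor
  · intro h
    have hD0 : 0 ≤ ∑ k ∈ Finset.Icc 2 m, (a m - a k) := Finset.sum_nonneg hterm
    have hkey : a m + ∑ k ∈ Finset.Icc 2 m, (a m - a k)
        = (m:ℤ) * a m - ∑ k ∈ Finset.Icc 2 m, a k := by rw [hDS]; ring
    have hDlt : a m + ∑ k ∈ Finset.Icc 2 m, (a m - a k) < 4 := by
      rw [hkey]; linarith
    have hcases : ∑ k ∈ Finset.Icc 2 m, (a m - a k) = 0 ∨
        ∑ k ∈ Finset.Icc 2 m, (a m - a k) = 1 ∨
        ∑ k ∈ Finset.Icc 2 m, (a m - a k) = 2 := by omega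
    rcases hcases with hD | hD | hD
    · -- all equal
      left
      have hall : ∀ k ∈ Finset.Icc 2 m, a m - a k = 0 :=
        (Finset.sum_eq_zero_iff_of_nonneg hterm).1 hD
      refine ⟨fun k hk => by linarith [hall k hk], ?_⟩
      simp only [Set.mem_insert_iff, Set.mem_singleton_iff]
      omega
    · -- D = 1
      have hm3 : 3 ≤ m := by
        by_contra hc
        have hm2 : m = 2 := by omega
        subst hm2
        simp at hD
      have h3eq : a 3 = a m := by
        have := hub 3 (by omega) hm3
        have h3n : (0:ℤ) ≤ a m - a 3 := by linarith [hmono 3 m (by omega) hm3 le_rfl]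
        push_cast at this
        omega
      have hall3 : ∀ k ∈ Finset.Icc 3 m, a k = a 3 := by
        intro k hk
        simp only [Finset.mem_Icc] at hk
        have h1 := hmono 3 k (by omega) hk.1 hk.2
        have h2 := hmono k m (by omega) hk.2 le_rfl
        omega
      have hsplit := step (fun k => a m - a k) 2 m hm
      beta_reduce at hsplit
      have hz : ∑ k ∈ Finset.Icc (2+1) m, (a m - a k) = 0 :=
        Finset.sum_eq_zero (fun k hk => by rw [hall3 k hk, h3eq]; ring)
      rw [hsplit, hz] at hD
      right; left
      refine ⟨hm3, by omega, hall3, ?_⟩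
      simp only [Set.mem_insert_iff, Set.mem_singleton_iff]
      omega
    · -- D = 2
      have hm4 : 4 ≤ m := by
        by_contra hc
        interval_cases m
        · simp at hD
        · have hsp := step a 2 3 (by omega)
          rw [show (2+1:ℕ) = 3 from rfl, Finset.Icc_self, Finset.sum_singleton] at hsp
          have h1 : a 3 < 2 := by linarith
          rw [hDS, hsp] at hD
          push_cast at hD
          omega
      have h4eq : a 4 = a m := by
        have := hub 4 (by omega) hm4
        have h4n : (0:ℤ) ≤ a m - a 4 := by linarith [hmono 4 m (by omega) hm4 le_rfl]
        push_cast at this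
        omega
      have ham1 : a m = 1 := by omega
      have hall4 : ∀ k ∈ Finset.Icc 4 m, a k = 1 := by
        intro k hk
        simp only [Finset.mem_Icc] at hk
        have h1 := hmono 4 k (by omega) hk.1 hk.2
        have h2 := hmono k m (by omega) hk.2 le_rfl
        omega
      have hsplit2 := step (fun k => a m - a k) 2 m hm
      have hsplit3 := step (fun k => a m - a k) 3 m (by omega)
      beta_reduce at hsplit2 hsplit3
      have hz : ∑ k ∈ Finset.Icc (3+1) m, (a m - a k) = 0 :=
        Finset.sum_eq_zero (fun k hk => by rw [hall4 k hk, ham1]; ring)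
      rw [hsplit2, show (2+1 : ℕ) = 3 from rfl, hsplit3, hz] at hD
      have h23 := hmono 2 3 le_rfl (by omega) (by omega)
      right; right
      exact ⟨hm4, by omega, by omega, hall4⟩
  · intro h
    rcases h with ⟨hall, hmem⟩ | ⟨hm3, h23, hall3, hmem⟩ | ⟨hm4, h2, h3, hall4⟩
    · have hS : ∑ k ∈ Finset.Icc 2 m, a k = ((m:ℤ) - 1) * a m := by
        rw [Finset.sum_congr rfl hall, Finset.sum_const, Nat.card_Icc, nsmul_eq_mul]
        have : ((m + 1 - 2 : ℕ) : ℤ) = (m:ℤ) - 1 := by omega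
        rw [this]
      rw [hS]
      simp only [Set.mem_insert_iff, Set.mem_singleton_iff] at hmem
      have hlt : a m < 4 := by omega
      nlinarith
    · have ham : a m = a 3 := hall3 m (Finset.mem_Icc.2 ⟨hm3, le_rfl⟩)
      have hS3 : ∑ k ∈ Finset.Icc 3 m, a k = ((m:ℤ) - 2) * a 3 := by
        rw [Finset.sum_congr rfl hall3, Finset.sum_const, Nat.card_Icc, nsmul_eq_mul]
        have : ((m + 1 - 3 : ℕ) : ℤ) = (m:ℤ) - 2 := by omega
        rw [this]
      rw [step a 2 m hm, show (2+1:ℕ) = 3 from rfl, hS3, ham]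
      simp only [Set.mem_insert_iff, Set.mem_singleton_iff] at hmem
      have hlt : a 3 < 3 := by omega
      nlinarith
    · have ham : a m = 1 := hall4 m (Finset.mem_Icc.2 ⟨hm4, le_rfl⟩)
      have hS4 : ∑ k ∈ Finset.Icc 4 m, a k = (m:ℤ) - 3 := by
        rw [Finset.sum_congr rfl hall4, Finset.sum_const, Nat.card_Icc, nsmul_eq_mul, mul_one]
        omega
      rw [step a 2 m hm, show (2+1:ℕ) = 3 from rfl, step a 3 m (by omega),
        show (3+1:ℕ) = 4 from rfl, hS4, h2, h3, ham]
      linarith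
end

section
/- Let m ≥ 2 and let a_2 ≤ a_3 ≤ … ≤ a_m be integers with 0 ≤ a_2 and a_m > 0. Then the inequality 3 + a_2 + … + a_m > m·a_m holds if and only if one of the following holds: (1) a_2 = … = a_m and this common value lies in {1,2}; (2) m ≥ 3, a_2 = 0 and a_3 = … = a_m = 1. -/
theorem stmt_1 (m : ℕ) (hm : 2 ≤ m) (a : ℕ → ℤ)
    (hmono : ∀ i j, 2 ≤ i → i ≤ j → j ≤ m → a i ≤ a j)
    (h0 : 0 ≤ a 2) (hpos : 0 < a m) :
    (3 + ∑ k ∈ Finset.Icc 2 m, a k > (m : ℤ) * a m) ↔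
      ((∀ k ∈ Finset.Icc 2 m, a k = a m) ∧ a m ∈ ({1, 2} : Set ℤ)) ∨
      (3 ≤ m ∧ a 2 = 0 ∧ ∀ k ∈ Finset.Icc 3 m, a k = 1) := by
  have hsplit : Finset.Icc 2 m = insert 2 (Finset.Icc 3 m) := by
    ext k
    simp only [Finset.mem_Icc, Finset.mem_insert]
    omega
  have h2notin : (2:ℕ) ∉ Finset.Icc 3 m := by simp
  have hcard : ((Finset.Icc 2 m).card : ℤ) = (m : ℤ) - 1 := by
    rw [Nat.card_Icc]; omega
  have hmemmono : ∀ k ∈ Finset.Icc 2 m, a k ≤ a m := by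
    intro k hk
    rw [Finset.mem_Icc] at hk
    exact hmono k m hk.1 hk.2 le_rfl
  have hT : ∑ k ∈ Finset.Icc 2 m, (a m - a k)
      = ((m:ℤ) - 1) * a m - ∑ k ∈ Finset.Icc 2 m, a k := by
    rw [Finset.sum_sub_distrib, Finset.sum_const, nsmul_eq_mul, hcard]
  constructor
  · intro h
    have hTnn : 0 ≤ ∑ k ∈ Finset.Icc 2 m, (a m - a k) :=
      Finset.sum_nonneg fun k hk => sub_nonneg.2 (hmemmono k hk)
    have hkey : a m + ∑ k ∈ Finset.Icc 2 m, (a m - a k) < 3 := by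
      rw [hT]; linarith
    have ham : a m = 1 ∨ a m = 2 := by omega
    rcases ham with h1 | h2
    · -- a m = 1
      have ha2le : a 2 ≤ a m := hmono 2 m le_rfl hm le_rfl
      have ha2 : a 2 = 0 ∨ a 2 = 1 := by omega
      rcases ha2 with ha20 | ha21
      · right
        have hm3 : 3 ≤ m := by
          rcases Nat.lt_or_ge m 3 with hlt | hge
          · exfalso
            have hm2 : m = 2 := by omega
            rw [hm2] at h1
            omega
          · exact hge
        refine ⟨hm3, ha20, ?_⟩
        have hsum : ∑ k ∈ Finset.Icc 2 m, (a m - a k)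
            = (a m - a 2) + ∑ k ∈ Finset.Icc 3 m, (a m - a k) := by
          rw [hsplit, Finset.sum_insert h2notin]
        have hTnn3 : ∀ k ∈ Finset.Icc 3 m, 0 ≤ a m - a k := by
          intro k hk
          rw [Finset.mem_Icc] at hk
          exact sub_nonneg.2 (hmono k m (by omega) hk.2 le_rfl)
        have hnn3 : 0 ≤ ∑ k ∈ Finset.Icc 3 m, (a m - a k) :=
          Finset.sum_nonneg hTnn3
        have hzero : ∑ k ∈ Finset.Icc 3 m, (a m - a k) = 0 := by omega
        have hall := (Finset.sum_eq_zero_iff_of_nonneg hTnn3).1 hzero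
        intro k hk
        have := hall k hk
        omega
      · left
        refine ⟨?_, Or.inl h1⟩
        intro k hk
        rw [Finset.mem_Icc] at hk
        have h1k := hmono 2 k le_rfl hk.1 hk.2
        have h2k := hmono k m hk.1 hk.2 le_rfl
        omega
    · left
      have hzero : ∑ k ∈ Finset.Icc 2 m, (a m - a k) = 0 := by omega
      have hall := (Finset.sum_eq_zero_iff_of_nonneg
        (fun k hk => sub_nonneg.2 (hmemmono k hk))).1 hzero
      exact ⟨fun k hk => by have := hall k hk; omega, Or.inr h2⟩
  · intro h
    rcases h with ⟨hall, hmem⟩ | ⟨hm3, ha20, hone⟩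
    · have hsum : ∑ k ∈ Finset.Icc 2 m, a k = ((m:ℤ) - 1) * a m := by
        rw [Finset.sum_congr rfl hall, Finset.sum_const, nsmul_eq_mul, hcard]
      rw [hsum]
      have hm' : (2:ℤ) ≤ (m:ℤ) := by exact_mod_cast hm
      rcases hmem with h1 | h2
      · rw [h1]; ring_nf; linarith
      · simp only [Set.mem_singleton_iff] at h2
        rw [h2]; ring_nf; linarith
    · have hcard3 : ((Finset.Icc 3 m).card : ℤ) = (m : ℤ) - 2 := by
        rw [Nat.card_Icc]; omega
      have ham : a m = 1 := hone m (by rw [Finset.mem_Icc]; omega)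
      have hsum3 : ∑ k ∈ Finset.Icc 3 m, a k = (m:ℤ) - 2 := by
        rw [Finset.sum_congr rfl hone, Finset.sum_const, nsmul_eq_mul, hcard3]
        ring
      have hsum : ∑ k ∈ Finset.Icc 2 m, a k = (m:ℤ) - 2 := by
        rw [hsplit, Finset.sum_insert h2notin, ha20, hsum3]; ring
      rw [hsum, ham]
      have hm' : (3:ℤ) ≤ (m:ℤ) := by exact_mod_cast hm3
      linarith
end

section
/- Let m ≥ 0, and let a, b, l₀, l₁, l₂ and c₁ ≤ … ≤ c_m be integers with 0 ≤ a ≤ b, l₀, l₁, l₂ ≥ 1 and l₀ = a + l₁ = b + l₂. Set d := max(b, c_m) if m ≥ 1 and d := b if m = 0. If 3 + b + c₁ + … + c_m − l₁ > (2+m)·d, then either d = 0 and l₁ ≤ 2, or d = 1 and l₁ = 1. -/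
theorem stmt_9 (m : ℕ) (a b l0 l1 l2 : ℤ) (c : ℕ → ℤ)
    (ha : 0 ≤ a) (hab : a ≤ b)
    (hl0 : 1 ≤ l0) (hl1 : 1 ≤ l1) (hl2 : 1 ≤ l2)
    (h1 : l0 = a + l1) (h2 : l0 = b + l2)
    (hmono : ∀ i j, 1 ≤ i → i ≤ j → j ≤ m → c i ≤ c j)
    (d : ℤ) (hd : d = if 1 ≤ m then max b (c m) else b)
    (h : 3 + b + (∑ k ∈ Finset.Icc 1 m, c k) - l1 > (2 + m) * d) :
    (d = 0 ∧ l1 ≤ 2) ∨ (d = 1 ∧ l1 = 1) := by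
  have hbd : b ≤ d := by
    rw [hd]; split
    · exact le_max_left _ _
    · exact le_rfl
  have hck : ∀ k ∈ Finset.Icc 1 m, c k ≤ d := by
    intro k hk
    simp only [Finset.mem_Icc] at hk
    have hm : 1 ≤ m := le_trans hk.1 hk.2
    have : c k ≤ c m := hmono k m hk.1 hk.2 le_rfl
    rw [hd, if_pos hm]
    exact le_trans this (le_max_right _ _)
  have hsum : (∑ k ∈ Finset.Icc 1 m, c k) ≤ (m : ℤ) * d := by
    calc (∑ k ∈ Finset.Icc 1 m, c k) ≤ ∑ k ∈ Finset.Icc 1 m, d :=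
          Finset.sum_le_sum hck
      _ = (m : ℤ) * d := by
          rw [Finset.sum_const, Nat.card_Icc]
          simp [mul_comm]
  have hb0 : 0 ≤ b := le_trans ha hab
  have hd0 : 0 ≤ d := le_trans hb0 hbd
  have hkey : d + l1 < 3 := by nlinarith [h, hsum, hbd]
  omega
end
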